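/- arXiv:2110.10789 — 6 statements merged into one kernel-verified Lean document; each statement's English description precedes it below -/
import Mathlib

section
/- Let p be a prime number and n_I ≥ 1 a natural number. Let ι be a finite index set, and for each y ∈ ι let n_y be a natural number with n_y ≤ n_I, let i_1(y), …, i_{n_y}(y) be positive integers, let a_1(y), …, a_{n_y}(y) be natural numbers with a_ℓ(y) ≤ p − 1 for all ℓ, and let e_y be an integer. Let g_X and g_Y be integers satisfying p^{n_I}·(2·g_Y − 2) = 2·g_X − 2 − ∑_{y∈ι} p^{n_I − n_y}·(p−1)·∑_{ℓ=1}^{n_y} p^{n_y − ℓ}·(i_ℓ(y) + 1). If ∑_{y∈ι} p^{n_I − n_y}·e_y > 2·g_X − 2, then ∑_{y∈ι} ⌊(e_y − ∑_{ℓ=1}^{n_y} a_ℓ(y)·p^{n_y − ℓ}·i_ℓ(y)) / p^{n_y}⌋ > 2·g_Y − 2. -/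
lemma geom_aux' (p : ℤ) (n : ℕ) :
    (p - 1) * ∑ ℓ ∈ Finset.Icc 1 n, p ^ (n - ℓ) = p ^ n - 1 := by
  have h : ∑ ℓ ∈ Finset.Icc 1 n, p ^ (n - ℓ) = ∑ k ∈ Finset.range n, p ^ k := by
    rw [← Finset.Ico_add_one_right_eq_Icc, Finset.sum_Ico_eq_sum_range]
    simp only [Nat.add_sub_cancel_left, Nat.succ_sub_one, Nat.add_sub_cancel]
    rw [← Finset.sum_range_reflect]
    apply Finset.sum_congr rfl
    intro k hk
    simp only [Finset.mem_range] at hk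
    congr 1
    omega
  rw [h]
  have := geom_sum_mul p n
  linarith [this]

lemma fdiv_ge' (x q : ℤ) (hq : 0 < q) : x - q + 1 ≤ q * Int.fdiv x q := by
  rw [Int.fdiv_eq_ediv_of_nonneg _ hq.le]
  have h1 := Int.emod_lt_of_pos x hq
  have h2 := Int.mul_ediv_add_emod x q
  omega

/-- Proposition 2.1(ii) of the paper (combinatorial content): if
`deg E > 2 g(X) - 2` then `deg E_j > 2 g(Y) - 2`, where the genera are
related by the Riemann-Hurwitz formula for the cover `X → Y = X/I`. -/
theorem divisor_Ej_degree_gt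
    (p : ℕ) (hp : p.Prime) (nI : ℕ) (hnI : 1 ≤ nI)
    (ι : Type*) [Fintype ι]
    (n : ι → ℕ) (hn : ∀ y, n y ≤ nI)
    (i : ι → ℕ → ℤ) (hi : ∀ y, ∀ ℓ ∈ Finset.Icc 1 (n y), 0 < i y ℓ)
    (a : ι → ℕ → ℕ) (ha : ∀ y, ∀ ℓ ∈ Finset.Icc 1 (n y), a y ℓ ≤ p - 1)
    (e : ι → ℤ) (gX gY : ℤ)
    (hRH : (p : ℤ) ^ nI * (2 * gY - 2) =
      2 * gX - 2 - ∑ y, (p : ℤ) ^ (nI - n y) * ((p : ℤ) - 1) *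
        ∑ ℓ ∈ Finset.Icc 1 (n y), (p : ℤ) ^ (n y - ℓ) * (i y ℓ + 1))
    (hdeg : ∑ y, (p : ℤ) ^ (nI - n y) * e y > 2 * gX - 2) :
    ∑ y, Int.fdiv
        (e y - ∑ ℓ ∈ Finset.Icc 1 (n y), (a y ℓ : ℤ) * (p : ℤ) ^ (n y - ℓ) * i y ℓ)
        ((p : ℤ) ^ (n y))
      > 2 * gY - 2 := by
  have hp1 : (1:ℤ) < (p:ℤ) := by exact_mod_cast hp.one_lt
  have hP : (0:ℤ) < (p:ℤ) ^ nI := by positivity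
  set F : ι → ℤ := fun y => Int.fdiv
      (e y - ∑ ℓ ∈ Finset.Icc 1 (n y), (a y ℓ : ℤ) * (p : ℤ) ^ (n y - ℓ) * i y ℓ)
      ((p : ℤ) ^ (n y)) with hF
  rw [gt_iff_lt, ← mul_lt_mul_iff_right₀ hP, Finset.mul_sum]
  have key : ∀ y, (p:ℤ) ^ (nI - n y) * (e y - ((p:ℤ) - 1) *
      ∑ ℓ ∈ Finset.Icc 1 (n y), (p:ℤ) ^ (n y - ℓ) * (i y ℓ + 1)) ≤ (p:ℤ) ^ nI * F y := by
    intro y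
    have hq : (0:ℤ) < (p:ℤ) ^ (n y) := by positivity
    have hpow : (0:ℤ) ≤ (p:ℤ) ^ (nI - n y) := by positivity
    have hsplit : (p:ℤ) ^ nI = (p:ℤ) ^ (nI - n y) * (p:ℤ) ^ (n y) := by
      rw [← pow_add]; congr 1; have := hn y; omega
    have h1 : e y - ∑ ℓ ∈ Finset.Icc 1 (n y), (a y ℓ : ℤ) * (p:ℤ) ^ (n y - ℓ) * i y ℓ
        - (p:ℤ) ^ (n y) + 1 ≤ (p:ℤ) ^ (n y) * F y := fdiv_ge' _ _ hq
    have h2 : ∑ ℓ ∈ Finset.Icc 1 (n y), (a y ℓ : ℤ) * (p:ℤ) ^ (n y - ℓ) * i y ℓ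
        + (p:ℤ) ^ (n y) - 1 ≤ ((p:ℤ) - 1) *
        ∑ ℓ ∈ Finset.Icc 1 (n y), (p:ℤ) ^ (n y - ℓ) * (i y ℓ + 1) := by
      have expand : ((p:ℤ) - 1) * ∑ ℓ ∈ Finset.Icc 1 (n y), (p:ℤ) ^ (n y - ℓ) * (i y ℓ + 1)
          = (∑ ℓ ∈ Finset.Icc 1 (n y), ((p:ℤ) - 1) * ((p:ℤ) ^ (n y - ℓ) * i y ℓ))
            + ((p:ℤ) ^ (n y) - 1) := by
        rw [← geom_aux' (p:ℤ) (n y), Finset.mul_sum, Finset.mul_sum, ← Finset.sum_add_distrib]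
        apply Finset.sum_congr rfl
        intro ℓ _
        ring
      rw [expand]
      have hterm : ∑ ℓ ∈ Finset.Icc 1 (n y), (a y ℓ : ℤ) * (p:ℤ) ^ (n y - ℓ) * i y ℓ
          ≤ ∑ ℓ ∈ Finset.Icc 1 (n y), ((p:ℤ) - 1) * ((p:ℤ) ^ (n y - ℓ) * i y ℓ) := by
        apply Finset.sum_le_sum
        intro ℓ hℓ
        have hia := hi y ℓ hℓ
        have haa : (a y ℓ : ℤ) ≤ (p:ℤ) - 1 := by
          have := ha y ℓ hℓ
          have hple : 1 ≤ p := hp.one_lt.le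
          omega
        have hpe : (0:ℤ) < (p:ℤ) ^ (n y - ℓ) := by positivity
        have h3 : (a y ℓ : ℤ) * ((p:ℤ) ^ (n y - ℓ) * i y ℓ)
            ≤ ((p:ℤ) - 1) * ((p:ℤ) ^ (n y - ℓ) * i y ℓ) :=
          mul_le_mul_of_nonneg_right haa (mul_pos hpe hia).le
        nlinarith [h3]
      linarith
    calc (p:ℤ) ^ (nI - n y) * (e y - ((p:ℤ) - 1) *
          ∑ ℓ ∈ Finset.Icc 1 (n y), (p:ℤ) ^ (n y - ℓ) * (i y ℓ + 1))
        ≤ (p:ℤ) ^ (nI - n y) * ((p:ℤ) ^ (n y) * F y) := by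
          apply mul_le_mul_of_nonneg_left _ hpow
          linarith
      _ = (p:ℤ) ^ nI * F y := by rw [← mul_assoc, ← hsplit]
  have hsum : ∑ y, (p:ℤ) ^ (nI - n y) * (e y - ((p:ℤ) - 1) *
      ∑ ℓ ∈ Finset.Icc 1 (n y), (p:ℤ) ^ (n y - ℓ) * (i y ℓ + 1))
      ≤ ∑ y, (p:ℤ) ^ nI * F y :=
    Finset.sum_le_sum fun y _ => key y
  have hexp : ∑ y, (p:ℤ) ^ (nI - n y) * (e y - ((p:ℤ) - 1) *
      ∑ ℓ ∈ Finset.Icc 1 (n y), (p:ℤ) ^ (n y - ℓ) * (i y ℓ + 1))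
      = ∑ y, (p:ℤ) ^ (nI - n y) * e y
        - ∑ y, (p:ℤ) ^ (nI - n y) * ((p:ℤ) - 1) *
          ∑ ℓ ∈ Finset.Icc 1 (n y), (p:ℤ) ^ (n y - ℓ) * (i y ℓ + 1) := by
    rw [← Finset.sum_sub_distrib]
    apply Finset.sum_congr rfl
    intro y _
    ring
  linarith
end

section
/- Let k be a field of prime characteristic p and let σ be a k-algebra automorphism of the rational function field k(X) = RatFunc k satisfying σ(X) = X + 1. Then σ has order p, and the fixed field of the cyclic subgroup generated by σ equals the intermediate field generated by X^p − X; that is, IntermediateField.fixedField (Subgroup.zpowers σ) = IntermediateField.adjoin k {X^p − X}. -/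
open Polynomial IntermediateField Module

/-- §4.1 of the paper (Artin–Schreier fixed field): if `σ` is a `k`-algebra
automorphism of `k(X)` with `σ(X) = X + 1` in characteristic `p`, then `σ`
has order `p` and the fixed field of `⟨σ⟩` is `k(X^p - X)`. -/
theorem fixedField_zpowers_artinSchreier
    (k : Type*) [Field k] (p : ℕ) (hp : p.Prime) [CharP k p]
    (σ : RatFunc k ≃ₐ[k] RatFunc k) (hσ : σ RatFunc.X = RatFunc.X + 1) :
    orderOf σ = p ∧
    IntermediateField.fixedField (Subgroup.zpowers σ) =
      IntermediateField.adjoin k {RatFunc.X ^ p - RatFunc.X} := by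
  haveI := Fact.mk hp
  haveI : CharP (RatFunc k) p :=
    charP_of_injective_algebraMap (algebraMap k (RatFunc k)).injective p
  -- σ^n X = X + n
  have hpow : ∀ n : ℕ, (σ ^ n) RatFunc.X = RatFunc.X + (n : RatFunc k) := by
    intro n
    induction n with
    | zero => simp
    | succ n ih =>
      rw [pow_succ', AlgEquiv.mul_apply, ih, map_add, hσ, map_natCast]
      push_cast; ring
  -- extensionality for algebra automorphisms of `RatFunc k`
  have hext : ∀ f g : RatFunc k ≃ₐ[k] RatFunc k, f RatFunc.X = g RatFunc.X → f = g := by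
    intro f g h
    suffices h' : (f : RatFunc k →+* RatFunc k) = (g : RatFunc k →+* RatFunc k) by
      ext x; exact RingHom.congr_fun h' x
    apply IsLocalization.ringHom_ext (nonZeroDivisors (Polynomial k))
    apply Polynomial.ringHom_ext
    · intro a
      show f (algebraMap k[X] (RatFunc k) (Polynomial.C a)) =
        g (algebraMap k[X] (RatFunc k) (Polynomial.C a))
      rw [RatFunc.algebraMap_C, ← RatFunc.algebraMap_eq_C, f.commutes, g.commutes]
    · show f (algebraMap k[X] (RatFunc k) Polynomial.X) =
        g (algebraMap k[X] (RatFunc k) Polynomial.X)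
      rw [RatFunc.algebraMap_X]; exact h
  have hσp : σ ^ p = 1 := by
    apply hext
    rw [hpow p, CharP.cast_eq_zero (RatFunc k) p]
    simp
  have hσne : σ ≠ 1 := by
    intro h
    rw [h] at hσ
    simp only [AlgEquiv.one_apply, left_eq_add, one_ne_zero] at hσ
  have hord : orderOf σ = p := orderOf_eq_prime hσp hσne
  set t : RatFunc k := RatFunc.X ^ p - RatFunc.X with ht
  have hσt : σ t = t := by
    rw [ht, map_sub, map_pow, hσ, add_pow_char, one_pow]
    ring
  have hinv : σ⁻¹ t = t := by
    conv_lhs => rw [← hσt]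
    exact σ.symm_apply_apply t
  have hzt : ∀ n : ℤ, (σ ^ n) t = t := by
    intro n
    induction n using Int.induction_on with
    | zero => simp
    | succ n ih => rw [zpow_add_one, AlgEquiv.mul_apply, hσt, ih]
    | pred n ih => rw [zpow_sub_one, AlgEquiv.mul_apply, hinv, ih]
  -- the lower bound field
  have hle : IntermediateField.adjoin k {t} ≤
      IntermediateField.fixedField (Subgroup.zpowers σ) := by
    rw [IntermediateField.adjoin_le_iff]
    rintro x rfl
    rintro ⟨g, n, rfl⟩
    exact hzt n
  -- Artin's lemma
  have hfo : IsOfFinOrder σ := by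
    rw [← orderOf_pos_iff, hord]; exact hp.pos
  haveI : Finite (Subgroup.zpowers σ) := hfo.finite_zpowers
  haveI : Fintype (Subgroup.zpowers σ) := Fintype.ofFinite _
  have hcard : Fintype.card (Subgroup.zpowers σ) = p := by
    rw [← Nat.card_eq_fintype_card, Nat.card_zpowers, hord]
  have hArtin : finrank (IntermediateField.fixedField (Subgroup.zpowers σ)) (RatFunc k) = p := by
    rw [← hcard]
    exact FixedPoints.finrank_eq_card (Subgroup.zpowers σ) (RatFunc k)
  -- `k(X)` is generated by `X`
  have hXtop : IntermediateField.adjoin k {(RatFunc.X : RatFunc k)} = ⊤ := by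
    rw [eq_top_iff]
    intro f _
    have hpoly : ∀ q : k[X], algebraMap k[X] (RatFunc k) q ∈
        IntermediateField.adjoin k {RatFunc.X} := by
      intro q
      have hq : (IsScalarTower.toAlgHom k k[X] (RatFunc k)) =
          (Polynomial.aeval (RatFunc.X : RatFunc k)) :=
        Polynomial.algHom_ext (by simp [RatFunc.algebraMap_X])
      have hq' : algebraMap k[X] (RatFunc k) q = Polynomial.aeval (RatFunc.X : RatFunc k) q :=
        DFunLike.congr_fun hq q
      rw [hq']
      exact IntermediateField.algebra_adjoin_le_adjoin k _
        (Polynomial.aeval_mem_adjoin_singleton k RatFunc.X)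
    rw [← RatFunc.num_div_denom f]
    exact div_mem (hpoly _) (hpoly _)
  -- the upper bound: `[k(X) : k(t)] ≤ p`
  set E : IntermediateField k (RatFunc k) := IntermediateField.adjoin k {t} with hEdef
  have htE : t ∈ E := IntermediateField.subset_adjoin k {t} rfl
  set c : E := ⟨t, htE⟩ with hcdef
  set q : Polynomial E := Polynomial.X ^ p - Polynomial.X - Polynomial.C c with hqdef
  have hq0 : Polynomial.aeval (RatFunc.X : RatFunc k) q = 0 := by
    simp only [hqdef, map_sub, map_pow, Polynomial.aeval_X, Polynomial.aeval_C]
    have : (algebraMap E (RatFunc k)) c = t := rfl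
    rw [this, ht]
    ring
  have hmonic : q.Monic := by
    rw [hqdef, sub_sub]
    apply Polynomial.monic_X_pow_sub
    apply lt_of_le_of_lt (Polynomial.degree_add_le _ _)
    rw [max_lt_iff]
    constructor
    · rw [Polynomial.degree_X]
      exact_mod_cast hp.one_lt
    · apply lt_of_le_of_lt (Polynomial.degree_C_le)
      exact_mod_cast hp.pos
  have hqdeg : q.natDegree ≤ p := by
    rw [hqdef]
    refine le_trans (Polynomial.natDegree_sub_le _ _) ?_
    rw [max_le_iff]
    constructor
    · refine le_trans (Polynomial.natDegree_sub_le _ _) ?_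
      rw [max_le_iff, Polynomial.natDegree_X_pow, Polynomial.natDegree_X]
      exact ⟨le_rfl, hp.one_lt.le⟩
    · rw [Polynomial.natDegree_C]; exact Nat.zero_le _
  have hInt : IsIntegral E (RatFunc.X : RatFunc k) := ⟨q, hmonic, hq0⟩
  have htop' : IntermediateField.adjoin E {(RatFunc.X : RatFunc k)} = ⊤ := by
    apply IntermediateField.restrictScalars_injective k
    rw [IntermediateField.restrictScalars_adjoin, IntermediateField.restrictScalars_top,
      eq_top_iff, ← hXtop]
    exact IntermediateField.adjoin.mono k _ _ (Set.subset_union_right)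
  haveI hFD : FiniteDimensional E (RatFunc k) := by
    have fd := IntermediateField.adjoin.finiteDimensional hInt
    rw [htop'] at fd
    exact (IntermediateField.topEquiv (F := E) (E := RatFunc k)).toLinearEquiv.finiteDimensional
  have hbound : finrank E (RatFunc k) ≤ p := by
    have h1 := IntermediateField.adjoin.finrank hInt
    rw [htop'] at h1
    have h2 : finrank E (RatFunc k) =
        finrank E (⊤ : IntermediateField E (RatFunc k)) :=
      ((IntermediateField.topEquiv (F := E) (E := RatFunc k)).toLinearEquiv.finrank_eq).symm
    rw [h2, h1]
    refine le_trans (Polynomial.natDegree_le_of_dvd (minpoly.dvd E _ hq0) hmonic.ne_zero) hqdeg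
  refine ⟨hord, ?_⟩
  exact (IntermediateField.eq_of_le_of_finrank_le' hle (by rw [hArtin]; exact hbound)).symm
end

section
/- Let k be a field of prime characteristic p containing an element ζ that is a primitive (p−1)-th root of unity. Let σ and ρ be k-algebra automorphisms of the rational function field k(X) = RatFunc k with σ(X) = X + 1 and ρ(X) = ζ⁻¹·X. Then (ρ ∘ σ ∘ ρ⁻¹)(X) = X + ζ, the subgroup H of the k-automorphism group of RatFunc k generated by {σ, ρ} is finite of order p·(p−1), and the fixed field of H equals the intermediate field generated by (X^p − X)^{p−1}; that is, IntermediateField.fixedField H = IntermediateField.adjoin k {(X^p − X)^{p−1}}. -/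
open Polynomial IntermediateField Module

private theorem ratfunc_algEquiv_ext {k : Type*} [Field k]
    {f g : RatFunc k ≃ₐ[k] RatFunc k} (h : f RatFunc.X = g RatFunc.X) : f = g := by
  have key : (f : RatFunc k →+* RatFunc k) = (g : RatFunc k →+* RatFunc k) := by
    refine IsLocalization.ringHom_ext (nonZeroDivisors (Polynomial k)) ?_
    refine Polynomial.ringHom_ext (fun a => ?_) ?_
    · simp only [RingHom.comp_apply, RatFunc.algebraMap_C, ← RatFunc.algebraMap_eq_C]
      rw [show ((f : RatFunc k →+* RatFunc k) : RatFunc k → RatFunc k) = f from rfl,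
        show ((g : RatFunc k →+* RatFunc k) : RatFunc k → RatFunc k) = g from rfl,
        f.commutes, g.commutes]
    · simp only [RingHom.comp_apply, RatFunc.algebraMap_X]; exact h
  exact AlgEquiv.ext fun x => RingHom.congr_fun key x

set_option maxHeartbeats 1000000 in
set_option synthInstance.maxHeartbeats 400000 in
/-- §4.1 of the paper: with `σ(X) = X + 1` and `ρ(X) = ζ⁻¹·X` for a primitive
`(p-1)`-th root of unity `ζ`, one has `ρσρ⁻¹(X) = X + ζ`, the group
`H = ⟨σ, ρ⟩` has order `p(p-1)`, and its fixed field is `k((X^p - X)^{p-1})`. -/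
theorem fixedField_closure_sigma_rho
    (k : Type*) [Field k] (p : ℕ) (hp : p.Prime) [CharP k p]
    (ζ : k) (hζ : IsPrimitiveRoot ζ (p - 1))
    (σ ρ : RatFunc k ≃ₐ[k] RatFunc k)
    (hσ : σ RatFunc.X = RatFunc.X + 1)
    (hρ : ρ RatFunc.X = RatFunc.C ζ⁻¹ * RatFunc.X) :
    (ρ * σ * ρ⁻¹) RatFunc.X = RatFunc.X + RatFunc.C ζ ∧
    Nat.card (Subgroup.closure {σ, ρ} : Subgroup (RatFunc k ≃ₐ[k] RatFunc k))
      = p * (p - 1) ∧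
    IntermediateField.fixedField (Subgroup.closure {σ, ρ}) =
      IntermediateField.adjoin k {(RatFunc.X ^ p - RatFunc.X) ^ (p - 1)} := by
  classical
  haveI := Fact.mk hp
  have hp2 : 2 ≤ p := hp.two_le
  have hζ0 : ζ ≠ 0 := hζ.ne_zero (by omega)
  haveI : CharP (RatFunc k) p :=
    charP_of_injective_algebraMap (algebraMap k (RatFunc k)).injective p
  have hC : ∀ (g : RatFunc k ≃ₐ[k] RatFunc k) (a : k), g (RatFunc.C a) = RatFunc.C a := by
    intro g a
    rw [← RatFunc.algebraMap_eq_C]; exact g.commutes a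
  have hζζ : RatFunc.C ζ * RatFunc.C ζ⁻¹ = 1 := by
    rw [← map_mul, mul_inv_cancel₀ hζ0, map_one]
  have hρinv : ρ⁻¹ RatFunc.X = RatFunc.C ζ * RatFunc.X := by
    apply ρ.injective
    rw [show ρ (ρ⁻¹ RatFunc.X) = (ρ * ρ⁻¹) RatFunc.X from rfl, mul_inv_cancel,
      AlgEquiv.one_apply, map_mul, hC, hρ, ← mul_assoc, hζζ, one_mul]
  have part1 : (ρ * σ * ρ⁻¹) RatFunc.X = RatFunc.X + RatFunc.C ζ := by
    rw [AlgEquiv.mul_apply, AlgEquiv.mul_apply, hρinv, map_mul, hC, hσ, map_mul, hC,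
      map_add, hρ, map_one, mul_add, ← mul_assoc, hζζ, one_mul, mul_one]
  -- powers of σ and ρ
  have hσn : ∀ n : ℕ, (σ ^ n) RatFunc.X = RatFunc.X + (n : RatFunc k) := by
    intro n
    induction n with
    | zero => simp
    | succ n ih =>
        rw [pow_succ', AlgEquiv.mul_apply, ih, map_add, hσ, map_natCast]
        push_cast; ring
  have hρn : ∀ n : ℕ, (ρ ^ n) RatFunc.X = RatFunc.C (ζ⁻¹ ^ n) * RatFunc.X := by
    intro n
    induction n with
    | zero => simp
    | succ n ih =>
        rw [pow_succ', AlgEquiv.mul_apply, ih, map_mul, hC, hρ, ← mul_assoc, ← map_mul,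
          ← pow_succ]
  have hCX : ∀ a : k, RatFunc.C a * RatFunc.X = RatFunc.X → a = 1 := by
    intro a h
    have : RatFunc.C a = RatFunc.C 1 := by
      apply mul_right_cancel₀ RatFunc.X_ne_zero
      rw [h, map_one, one_mul]
    exact (RatFunc.C : k →+* RatFunc k).injective this
  have horderσ : orderOf σ = p := by
    refine orderOf_eq_prime ?_ ?_
    · apply ratfunc_algEquiv_ext
      rw [hσn, AlgEquiv.one_apply, CharP.cast_eq_zero, add_zero]
    · intro h
      rw [h, AlgEquiv.one_apply, left_eq_add] at hσ
      exact one_ne_zero hσ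
  have horderρ : orderOf ρ = p - 1 := by
    have h1 : ρ ^ (p - 1) = 1 := by
      apply ratfunc_algEquiv_ext
      rw [hρn, AlgEquiv.one_apply, inv_pow, hζ.pow_eq_one, inv_one, map_one, one_mul]
    refine Nat.dvd_antisymm (orderOf_dvd_of_pow_eq_one h1) ?_
    have h2 := pow_orderOf_eq_one ρ
    have h3 : (ρ ^ orderOf ρ) RatFunc.X = RatFunc.X := by rw [h2, AlgEquiv.one_apply]
    rw [hρn] at h3
    have h4 : ζ⁻¹ ^ orderOf ρ = 1 := hCX _ h3
    have h5 : ζ ^ orderOf ρ = 1 := by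
      rw [inv_pow, inv_eq_one] at h4; exact h4
    exact hζ.dvd_of_pow_eq_one _ h5
  -- the invariant element y
  set y : RatFunc k := (RatFunc.X ^ p - RatFunc.X) ^ (p - 1) with hy
  have hσy : σ y = y := by
    rw [hy, map_pow, map_sub, map_pow, hσ, add_pow_char, one_pow, add_sub_add_right_eq_sub]
  have hζp : ζ⁻¹ ^ p = ζ⁻¹ := by
    conv_lhs => rw [show p = (p - 1) + 1 by omega]
    rw [pow_succ, inv_pow, hζ.pow_eq_one, inv_one, one_mul]
  have hρy : ρ y = y := by
    rw [hy, map_pow, map_sub, map_pow, hρ, mul_pow, ← map_pow, hζp, ← mul_sub, mul_pow,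
      ← map_pow, inv_pow, hζ.pow_eq_one, inv_one, map_one, one_mul]
  set H : Subgroup (RatFunc k ≃ₐ[k] RatFunc k) := Subgroup.closure {σ, ρ} with hH
  have hyH : ∀ g ∈ H, g y = y := by
    intro g hg
    induction hg using Subgroup.closure_induction with
    | mem g hg =>
        rcases hg with rfl | rfl
        · exact hσy
        · exact hρy
    | one => rfl
    | mul a b _ _ iha ihb => rw [AlgEquiv.mul_apply, ihb, iha]
    | inv a _ iha =>
        calc a⁻¹ y = a⁻¹ (a y) := by rw [iha]
        _ = (a⁻¹ * a) y := rfl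
        _ = y := by rw [inv_mul_cancel, AlgEquiv.one_apply]
  set K₀ : IntermediateField k (RatFunc k) := IntermediateField.adjoin k {y} with hK₀
  have hK₀le : K₀ ≤ IntermediateField.fixedField H := by
    rw [hK₀, IntermediateField.adjoin_le_iff, Set.singleton_subset_iff]
    exact fun g => hyH g g.2
  -- integrality of X over K₀
  have hy_mem : y ∈ K₀ := IntermediateField.mem_adjoin_simple_self k y
  set c : K₀ := ⟨y, hy_mem⟩ with hc
  set Q : Polynomial K₀ := (Polynomial.X ^ p - Polynomial.X) ^ (p - 1) with hQ
  set P : Polynomial K₀ := Q - Polynomial.C c with hP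
  have hQbmonic : ((Polynomial.X ^ p - Polynomial.X : Polynomial K₀)).Monic := by
    refine (monic_X_pow p).sub_of_left ?_
    rw [degree_X_pow, degree_X]
    exact_mod_cast hp.one_lt
  have hQbdeg : ((Polynomial.X ^ p - Polynomial.X : Polynomial K₀)).natDegree = p := by
    rw [natDegree_sub_eq_left_of_natDegree_lt, natDegree_X_pow]
    rw [natDegree_X, natDegree_X_pow]; omega
  have hQmonic : Q.Monic := hQbmonic.pow _
  have hQdeg : Q.natDegree = (p - 1) * p := by
    rw [hQ, natDegree_pow, hQbdeg]
  have hPmonic : P.Monic := by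
    refine hQmonic.sub_of_left (lt_of_le_of_lt degree_C_le ?_)
    rw [← natDegree_pos_iff_degree_pos, hQdeg]
    exact Nat.mul_pos (by omega) (by omega)
  have hPdeg : P.natDegree = (p - 1) * p := by
    rw [hP, natDegree_sub_eq_left_of_natDegree_lt, hQdeg]
    rw [natDegree_C, hQdeg]
    exact Nat.mul_pos (by omega) (by omega)
  have haeval : Polynomial.aeval (RatFunc.X : RatFunc k) P = 0 := by
    simp only [hP, hQ, map_sub, map_pow, aeval_X, aeval_C]
    rw [show (algebraMap K₀ (RatFunc k)) c = y from rfl, hy, sub_self]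
  have hint : IsIntegral K₀ (RatFunc.X : RatFunc k) := ⟨P, hPmonic, haeval⟩
  -- RatFunc k = K₀(X)
  have hpoly : ∀ q : Polynomial k,
      algebraMap (Polynomial k) (RatFunc k) q ∈ IntermediateField.adjoin K₀ {(RatFunc.X : RatFunc k)} := by
    intro q
    induction q using Polynomial.induction_on' with
    | add f g hf hg => rw [map_add]; exact add_mem hf hg
    | monomial n a =>
        rw [← Polynomial.C_mul_X_pow_eq_monomial, map_mul, map_pow, RatFunc.algebraMap_C,
          RatFunc.algebraMap_X]
        have hXm : (RatFunc.X : RatFunc k) ∈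
            IntermediateField.adjoin K₀ {(RatFunc.X : RatFunc k)} :=
          IntermediateField.subset_adjoin _ _ rfl
        have hCa : RatFunc.C a ∈ IntermediateField.adjoin K₀ {(RatFunc.X : RatFunc k)} := by
          rw [← RatFunc.algebraMap_eq_C, IsScalarTower.algebraMap_apply k K₀ (RatFunc k)]
          exact IntermediateField.algebraMap_mem _ _
        exact mul_mem hCa (pow_mem hXm n)
  have htop : IntermediateField.adjoin K₀ {(RatFunc.X : RatFunc k)} = ⊤ := by
    rw [eq_top_iff]
    intro z _
    rw [← RatFunc.num_div_denom z]
    exact div_mem (hpoly _) (hpoly _)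
  haveI hfd : FiniteDimensional K₀ (RatFunc k) := by
    haveI := IntermediateField.adjoin.finiteDimensional hint
    rw [htop] at this
    exact (IntermediateField.topEquiv (F := K₀) (E := RatFunc k)).toLinearEquiv.finiteDimensional
  have hrank : finrank K₀ (RatFunc k) ≤ p * (p - 1) := by
    have h1 : finrank K₀ (RatFunc k) = (minpoly K₀ (RatFunc.X : RatFunc k)).natDegree := by
      rw [← IntermediateField.adjoin.finrank hint]
      have := (IntermediateField.equivOfEq htop).trans
        (IntermediateField.topEquiv (F := K₀) (E := RatFunc k))
      exact (this.toLinearEquiv.finrank_eq).symm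
    rw [h1]
    have h2 : (minpoly K₀ (RatFunc.X : RatFunc k)).natDegree ≤ P.natDegree :=
      natDegree_le_natDegree (minpoly.min K₀ (RatFunc.X : RatFunc k) hPmonic haeval)
    rw [hPdeg] at h2
    exact h2.trans_eq (Nat.mul_comm _ _)
  -- finiteness of H
  have hHfix : H ≤ IntermediateField.fixingSubgroup K₀ :=
    (IntermediateField.le_iff_le H K₀).mp hK₀le
  haveI : Finite (IntermediateField.fixingSubgroup K₀) :=
    Finite.of_equiv _ (IntermediateField.fixingSubgroupEquiv K₀).toEquiv.symm
  haveI : Finite H :=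
    Finite.of_injective (Set.inclusion (fun x hx => hHfix hx)) (Set.inclusion_injective _)
  haveI : Fintype H := Fintype.ofFinite H
  haveI : FaithfulSMul H (RatFunc k) := ⟨fun h => Subtype.ext (AlgEquiv.ext h)⟩
  have hcard : finrank (IntermediateField.fixedField H) (RatFunc k) = Fintype.card H :=
    FixedPoints.finrank_eq_card H (RatFunc k)
  -- lower bound on the order of H
  have hσH : σ ∈ H := Subgroup.subset_closure (by simp)
  have hρH : ρ ∈ H := Subgroup.subset_closure (by simp)
  have h1 : p ∣ Nat.card H := by
    rw [← horderσ, ← Subgroup.orderOf_mk σ hσH]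
    exact orderOf_dvd_natCard _
  have h2 : (p - 1) ∣ Nat.card H := by
    rw [← horderρ, ← Subgroup.orderOf_mk ρ hρH]
    exact orderOf_dvd_natCard _
  have hcop : Nat.Coprime p (p - 1) := by
    rw [← Nat.coprime_sub_self_left (by omega : p - 1 ≤ p),
      show p - (p - 1) = 1 by omega]
    exact Nat.coprime_one_left _
  have hdvd : p * (p - 1) ∣ Nat.card H := hcop.mul_dvd_of_dvd_of_dvd h1 h2
  have hle : p * (p - 1) ≤ Nat.card H := Nat.le_of_dvd Nat.card_pos hdvd
  have hF : K₀ = IntermediateField.fixedField H := by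
    apply IntermediateField.eq_of_le_of_finrank_le' hK₀le
    rw [hcard, ← Nat.card_eq_fintype_card]
    exact hrank.trans hle
  have hcard2 : Nat.card H = p * (p - 1) := by
    have h3 : finrank (IntermediateField.fixedField H) (RatFunc k) ≤ p * (p - 1) :=
      hF ▸ hrank
    rw [hcard, ← Nat.card_eq_fintype_card] at h3
    exact le_antisymm h3 hle
  exact ⟨part1, hcard2, hF.symm⟩
end

section
/- Let O be a discrete valuation ring with maximal ideal 𝔪 and fraction field F, let G be a finite group, let V be a module over the group algebra F[G], and let M ⊆ V be an O[G]-submodule that is finitely generated as an O-module and spans V over F. Let e₁ and e₂ be central idempotents of F[G] with e₁·e₂ = 0 and e₁ + e₂ = 1, and set M_i := M ∩ e_i·V for i = 1, 2. Then the following are equivalent: (i) there exist f₁ ∈ M₁ and f₂ ∈ M₂ such that f₁ − f₂ ∈ 𝔪·M but f₁ ∉ 𝔪·M; (ii) M ≠ M₁ + M₂ (equivalently, M is not the internal direct sum of M₁ and M₂). -/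
open Pointwise

/-- The lattice-theoretic criterion behind Theorem 5.4 of the paper: for an
`O[G]`-lattice `M` spanning a module `V` over `F[G]` (with `O` a DVR with
maximal ideal `𝔪` and fraction field `F`), and orthogonal central idempotents
`e₁ + e₂ = 1` of `F[G]`, setting `Mᵢ = M ∩ eᵢ·V`, there is a nontrivial
congruence modulo `𝔪` linking `M₁` and `M₂` (a pair `f₁ ∈ M₁`, `f₂ ∈ M₂` with
`f₁ - f₂ ∈ 𝔪·M` but `f₁ ∉ 𝔪·M`) if and only if `M ≠ M₁ + M₂`. -/
theorem lattice_congruence_criterion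
    (O : Type*) [CommRing O] [IsDomain O] [IsDiscreteValuationRing O]
    (F : Type*) [Field F] [Algebra O F] [IsFractionRing O F]
    (G : Type*) [Group G] [Finite G]
    (V : Type*) [AddCommGroup V] [Module (MonoidAlgebra F G) V]
    [Module F V] [IsScalarTower F (MonoidAlgebra F G) V]
    [Module O V] [IsScalarTower O F V]
    (M : Submodule O V)
    (hMG : ∀ (g : G), ∀ x ∈ M, (MonoidAlgebra.of F G g : MonoidAlgebra F G) • x ∈ M)
    (hMfg : M.FG)
    (hMspan : Submodule.span F (M : Set V) = ⊤)
    (e₁ e₂ : MonoidAlgebra F G)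
    (he₁central : ∀ x, e₁ * x = x * e₁) (he₂central : ∀ x, e₂ * x = x * e₂)
    (he₁ : IsIdempotentElem e₁) (he₂ : IsIdempotentElem e₂)
    (horth : e₁ * e₂ = 0) (hsum : e₁ + e₂ = 1) :
    (∃ f₁ ∈ (M : Set V) ∩ Set.range (fun v : V => e₁ • v),
      ∃ f₂ ∈ (M : Set V) ∩ Set.range (fun v : V => e₂ • v),
        f₁ - f₂ ∈ (IsLocalRing.maximalIdeal O) • M ∧
        f₁ ∉ (IsLocalRing.maximalIdeal O) • M) ↔
    ¬ (∀ x ∈ M, ∃ y ∈ (M : Set V) ∩ Set.range (fun v : V => e₁ • v),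
        ∃ z ∈ (M : Set V) ∩ Set.range (fun v : V => e₂ • v), x = y + z) := by
  classical
  obtain ⟨π, hπ⟩ := IsDiscreteValuationRing.exists_irreducible O
  have hπmax : IsLocalRing.maximalIdeal O = Ideal.span {π} :=
    (IsDiscreteValuationRing.irreducible_iff_uniformizer π).mp hπ
  have hmsmul : (IsLocalRing.maximalIdeal O) • M = π • M := by
    rw [hπmax, Submodule.ideal_span_singleton_smul]
  have hπF : algebraMap O F π ≠ 0 :=
    (map_ne_zero_iff _ (IsFractionRing.injective O F)).mpr hπ.ne_zero
  -- commutation of the F[G]-action with F- and O-scalars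
  have hsmulF : ∀ (e : MonoidAlgebra F G) (c : F) (v : V),
      e • (c • v) = c • (e • v) := by
    intro e c v
    rw [← algebraMap_smul (MonoidAlgebra F G) c v, ← mul_smul, ← Algebra.commutes,
      mul_smul, algebraMap_smul]
  have hsmulO : ∀ (e : MonoidAlgebra F G) (c : O) (v : V),
      e • (c • v) = c • (e • v) := by
    intro e c v
    rw [← algebraMap_smul F c v, hsmulF, algebraMap_smul]
  -- projection identities
  have hproj1 : ∀ v : V, e₁ • (e₁ • v) = e₁ • v := fun v => by
    rw [smul_smul, he₁]
  have h12 : ∀ v : V, e₁ • (e₂ • v) = 0 := fun v => by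
    rw [smul_smul, horth, zero_smul]
  have hsplit : ∀ v : V, v = e₁ • v + e₂ • v := fun v => by
    rw [← add_smul, hsum, one_smul]
  -- cancellation of π on V
  have hcancel : ∀ v w : V, π • v = π • w → v = w := by
    intro v w h
    rw [← algebraMap_smul F π v, ← algebraMap_smul F π w] at h
    have h2 := congrArg (fun u => (algebraMap O F π)⁻¹ • u) h
    rwa [inv_smul_smul₀ hπF, inv_smul_smul₀ hπF] at h2
  -- membership in π • M
  have hmemπ : ∀ w : V, w ∈ π • M ↔ ∃ m ∈ M, π • m = w := by
    intro w
    constructor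
    · intro hw
      have hw' : w ∈ (π • (M : Set V)) := by
        rw [← Submodule.coe_pointwise_smul]; exact hw
      obtain ⟨m, hm, hmw⟩ := hw'
      exact ⟨m, hm, hmw⟩
    · rintro ⟨m, hm, rfl⟩
      exact Submodule.smul_mem_pointwise_smul m π M hm
  -- decomposability of x ∈ M is the same as e₁ • x ∈ M
  have hdec : ∀ x ∈ M,
      ((∃ y ∈ (M : Set V) ∩ Set.range (fun v : V => e₁ • v),
        ∃ z ∈ (M : Set V) ∩ Set.range (fun v : V => e₂ • v), x = y + z)
        ↔ e₁ • x ∈ M) := by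
    intro x hx
    constructor
    · rintro ⟨y, ⟨hyM, vy, rfl⟩, z, ⟨hzM, vz, rfl⟩, rfl⟩
      simpa [smul_add, hproj1, h12] using hyM
    · intro h1
      refine ⟨e₁ • x, ⟨h1, x, rfl⟩, e₂ • x, ⟨?_, x, rfl⟩, hsplit x⟩
      have hz : e₂ • x + e₁ • x = x := by rw [add_comm]; exact (hsplit x).symm
      rw [eq_sub_of_add_eq hz]
      exact M.sub_mem hx h1
  rw [hmsmul]
  constructor
  · -- congruence ⇒ not decomposable
    rintro ⟨f₁, ⟨hf₁M, v₁, rfl⟩, f₂, ⟨hf₂M, v₂, rfl⟩, hdiff, hnem⟩ H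
    apply hnem
    obtain ⟨m, hm, hmeq⟩ := (hmemπ _).mp hdiff
    have hem : e₁ • m ∈ M := (hdec m hm).mp (H m hm)
    show e₁ • v₁ ∈ π • M
    have heq : e₁ • v₁ = π • (e₁ • m) := by
      have h3 := congrArg (fun u => e₁ • u) hmeq
      simp only [smul_sub, hproj1, h12, hsmulO, sub_zero] at h3
      exact h3.symm
    rw [heq]
    exact (hmemπ _).mpr ⟨e₁ • m, hem, rfl⟩
  · -- not decomposable ⇒ congruence
    intro H
    push_neg at H
    obtain ⟨x, hx, hxnd⟩ := H
    have hex : e₁ • x ∉ M := by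
      intro h
      obtain ⟨y, hy, z, hz, heq⟩ := (hdec x hx).mpr h
      exact hxnd y hy z hz heq
    -- find a power of π clearing denominators of e₁ • x
    have hbound : ∀ w ∈ Submodule.span F (M : Set V), ∃ b : O, b ≠ 0 ∧ b • w ∈ M := by
      intro w hw
      induction hw using Submodule.span_induction with
      | mem w hw => exact ⟨1, one_ne_zero, by simpa using hw⟩
      | zero => exact ⟨1, one_ne_zero, by simp⟩
      | add w₁ w₂ _ _ ih₁ ih₂ =>
        obtain ⟨b₁, hb₁, hb₁M⟩ := ih₁
        obtain ⟨b₂, hb₂, hb₂M⟩ := ih₂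
        refine ⟨b₁ * b₂, mul_ne_zero hb₁ hb₂, ?_⟩
        rw [smul_add]
        refine M.add_mem ?_ ?_
        · rw [mul_comm, mul_smul]; exact M.smul_mem _ hb₁M
        · rw [mul_smul]; exact M.smul_mem _ hb₂M
      | smul c w _ ih =>
        obtain ⟨b, hb, hbM⟩ := ih
        obtain ⟨⟨a, s⟩, hs⟩ := IsLocalization.surj (nonZeroDivisors O) c
        have hs' : c * algebraMap O F (s : O) = algebraMap O F a := hs
        refine ⟨(s : O) * b, mul_ne_zero (nonZeroDivisors.coe_ne_zero s) hb, ?_⟩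
        have key : (s : O) • (c • w) = a • w := by
          rw [← algebraMap_smul F (s : O) (c • w), smul_smul, mul_comm, hs',
            algebraMap_smul]
        have : ((s : O) * b) • (c • w) = a • (b • w) := by
          rw [mul_comm, mul_smul, key, smul_smul, mul_comm, mul_smul]
        rw [this]
        exact M.smul_mem _ hbM
    obtain ⟨b, hb, hbM⟩ := hbound (e₁ • x) (by rw [hMspan]; trivial)
    obtain ⟨k, u, hu⟩ := IsDiscreteValuationRing.eq_unit_mul_pow_irreducible hb hπ
    have hP : ∃ n : ℕ, π ^ n • (e₁ • x) ∈ M := by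
      refine ⟨k, ?_⟩
      have h4 : π ^ k • (e₁ • x) = ((u⁻¹ : Oˣ) : O) • (b • (e₁ • x)) := by
        rw [smul_smul, hu, ← mul_assoc, Units.inv_mul, one_mul]
      rw [h4]
      exact M.smul_mem _ hbM
    have hnpos : 0 < Nat.find hP := by
      rcases Nat.eq_zero_or_pos (Nat.find hP) with h | h
      · exact absurd (by simpa [h] using Nat.find_spec hP) hex
      · exact h
    obtain ⟨m, hm⟩ : ∃ m, Nat.find hP = m + 1 :=
      ⟨Nat.find hP - 1, (Nat.succ_pred_eq_of_pos hnpos).symm⟩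
    have hnspec : π ^ (m + 1) • (e₁ • x) ∈ M := hm ▸ Nat.find_spec hP
    refine ⟨π ^ (m + 1) • (e₁ • x), ⟨hnspec, π ^ (m + 1) • x, hsmulO e₁ _ x⟩,
      π ^ (m + 1) • (e₁ • x) - π ^ (m + 1) • x,
      ⟨M.sub_mem hnspec (M.smul_mem _ hx), -(π ^ (m + 1) • x), ?_⟩, ?_, ?_⟩
    · -- f₂ is in the range of e₂ • ·
      show e₂ • (-(π ^ (m + 1) • x)) = _
      have hs2 : π ^ (m + 1) • x = π ^ (m + 1) • (e₁ • x) + π ^ (m + 1) • (e₂ • x) := by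
        rw [← smul_add, ← hsplit x]
      rw [smul_neg, hsmulO, hs2]
      abel
    · -- the difference lies in π • M
      have : π ^ (m + 1) • (e₁ • x) - (π ^ (m + 1) • (e₁ • x) - π ^ (m + 1) • x)
          = π • (π ^ m • x) := by
        rw [smul_smul, ← pow_succ']
        abel
      rw [this]
      exact (hmemπ _).mpr ⟨π ^ m • x, M.smul_mem _ hx, rfl⟩
    · -- f₁ ∉ π • M, by minimality of n
      intro hmem
      obtain ⟨w, hwM, hweq⟩ := (hmemπ _).mp hmem
      have h5 : π ^ m • (e₁ • x) = w := by
        apply hcancel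
        rw [smul_smul, ← pow_succ']
        exact hweq.symm
      have hmM : π ^ m • (e₁ • x) ∈ M := h5 ▸ hwM
      exact Nat.find_min hP (by rw [hm]; exact m.lt_succ_self) hmM
end

section
/- Let ℓ be an odd prime, let ζ ∈ ℂ be a primitive ℓ-th root of unity, and let G := ∑_{a=1}^{ℓ−1} (legendreSym ℓ a)·ζ^a be the quadratic Gauss sum. Then for every natural number M with M ≤ ℓ − 1, ∑_{a=1}^{(ℓ−1)/2} ∑_{d=1}^{ℓ−1−M} ζ^{−a²·d} = −(ℓ−1)/2 + (M − (∑_{d=1}^{M} legendreSym ℓ d)·G)/2. -/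
open Finset

lemma zpow_eq_char (ℓ : ℕ) [Fact ℓ.Prime] (ζ : ℂ) (hζ : IsPrimitiveRoot ζ ℓ) (k : ℤ) :
    ζ ^ k = AddChar.zmodChar ℓ (hζ.pow_eq_one) (k : ZMod ℓ) := by
  have hℓ0 : (ℓ : ℕ) ≠ 0 := (Fact.out : ℓ.Prime).ne_zero
  have hz0 : ζ ≠ 0 := hζ.ne_zero hℓ0
  rw [AddChar.zmodChar_apply]
  set v : ℕ := ((k : ZMod ℓ)).val with hv
  have hdvd : (ℓ : ℤ) ∣ (k - v) := by
    rw [← ZMod.intCast_zmod_eq_zero_iff_dvd]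
    push_cast
    simp [hv, ZMod.natCast_val, ZMod.cast_id]
  have h1 : ζ ^ (k - (v:ℤ)) = 1 := by
    rw [hζ.zpow_eq_one_iff_dvd]; exact hdvd
  calc ζ ^ k = ζ ^ ((v:ℤ) + (k - v)) := by ring_nf
    _ = ζ ^ (v:ℤ) * ζ ^ (k - (v:ℤ)) := zpow_add₀ hz0 _ _
    _ = ζ ^ v := by rw [h1, mul_one, zpow_natCast]
-- transfer lemma
lemma sum_Icc_eq_sum_zmod (ℓ : ℕ) [Fact ℓ.Prime] (f : ZMod ℓ → ℂ) :
    ∑ a ∈ Icc 1 (ℓ - 1), f (a : ZMod ℓ) = ∑ x ∈ univ \ {0}, f x := by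
  have hℓ1 : 1 < ℓ := (Fact.out : ℓ.Prime).one_lt
  refine Finset.sum_nbij' (fun a => (a : ZMod ℓ)) (fun x => x.val) ?_ ?_ ?_ ?_ ?_
  · intro a ha
    simp only [mem_Icc] at ha
    simp only [mem_sdiff, mem_univ, mem_singleton, true_and]
    rw [ZMod.natCast_eq_zero_iff]
    intro hdvd
    rcases Nat.eq_zero_of_dvd_of_lt hdvd (lt_of_le_of_lt ha.2 (by omega)) with h
    omega
  · intro x hx
    simp only [mem_sdiff, mem_univ, mem_singleton, true_and] at hx
    have h1 : x.val < ℓ := ZMod.val_lt x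
    have h2 : x.val ≠ 0 := fun h => hx (by rwa [← ZMod.val_eq_zero])
    simp only [mem_Icc]; omega
  · intro a ha
    simp only [mem_Icc] at ha
    exact ZMod.val_cast_of_lt (by omega)
  · intro x hx
    simp [ZMod.natCast_val, ZMod.cast_id]
  · intro a ha; rfl

lemma sum_sq_double (ℓ : ℕ) [Fact ℓ.Prime] (hℓ : Odd ℓ) (g : ZMod ℓ → ℂ) :
    ∑ a ∈ Icc 1 (ℓ - 1), g ((a : ZMod ℓ) ^ 2)
      = 2 * ∑ a ∈ Icc 1 ((ℓ - 1) / 2), g ((a : ZMod ℓ) ^ 2) := by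
  have hℓ1 : 1 < ℓ := (Fact.out : ℓ.Prime).one_lt
  obtain ⟨h, hh⟩ : ∃ h, ℓ - 1 = 2 * h := by
    obtain ⟨t, ht⟩ := hℓ; exact ⟨t, by omega⟩
  have hsplit : Icc 1 (ℓ - 1) = Icc 1 ((ℓ-1)/2) ∪ Icc ((ℓ-1)/2 + 1) (ℓ - 1) := by
    ext x; simp only [mem_Icc, mem_union]; omega
  have hdisj : Disjoint (Icc 1 ((ℓ-1)/2)) (Icc ((ℓ-1)/2 + 1) (ℓ - 1)) := by
    rw [Finset.disjoint_left]; intro x hx hx'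
    simp only [mem_Icc] at hx hx'; omega
  rw [hsplit, Finset.sum_union hdisj, two_mul]
  congr 1
  refine Finset.sum_nbij' (fun a => ℓ - a) (fun a => ℓ - a) ?_ ?_ ?_ ?_ ?_
  · intro a ha; simp only [mem_Icc] at *; omega
  · intro a ha; simp only [mem_Icc] at *; omega
  · intro a ha; simp only [mem_Icc] at ha; show ℓ - (ℓ - a) = a; omega
  · intro a ha; simp only [mem_Icc] at ha; show ℓ - (ℓ - a) = a; omega
  · intro a ha
    simp only [mem_Icc] at ha
    have : ((ℓ - a : ℕ) : ZMod ℓ) = -(a : ZMod ℓ) := by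
      have h1 : a ≤ ℓ := by omega
      push_cast [Nat.cast_sub h1]
      simp
    rw [this, neg_sq]

lemma sum_sq_fiber (ℓ : ℕ) [Fact ℓ.Prime] (hℓ : Odd ℓ) (g : ZMod ℓ → ℂ) :
    ∑ x : ZMod ℓ, g (x ^ 2)
      = ∑ y : ZMod ℓ, (1 + (quadraticChar (ZMod ℓ) y : ℂ)) * g y := by
  have hchar : ringChar (ZMod ℓ) ≠ 2 := by
    rw [ZMod.ringChar_zmod_n]
    obtain ⟨t, ht⟩ := hℓ; omega
  rw [← Finset.sum_fiberwise univ (fun x : ZMod ℓ => x ^ 2) (fun x => g (x ^ 2))]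
  refine Finset.sum_congr rfl fun y _ => ?_
  have hcard : ({x : ZMod ℓ | x ^ 2 = y}.toFinset.card : ℂ)
      = (quadraticChar (ZMod ℓ) y : ℂ) + 1 := by
    have := quadraticChar_card_sqrts hchar y
    exact_mod_cast congrArg (Int.cast : ℤ → ℂ) this
  have hfil : {x : ZMod ℓ | x ^ 2 = y}.toFinset = univ.filter (fun x => x ^ 2 = y) := by
    ext x; simp
  calc ∑ x ∈ univ.filter (fun x : ZMod ℓ => x ^ 2 = y), g (x ^ 2)
      = ∑ x ∈ univ.filter (fun x : ZMod ℓ => x ^ 2 = y), g y := by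
        refine Finset.sum_congr rfl fun x hx => ?_
        rw [Finset.mem_filter] at hx; rw [hx.2]
    _ = (univ.filter (fun x : ZMod ℓ => x ^ 2 = y)).card * g y := by
        rw [Finset.sum_const, nsmul_eq_mul]
    _ = (1 + (quadraticChar (ZMod ℓ) y : ℂ)) * g y := by
        rw [← hfil, hcard]; ring

section
variable (ℓ : ℕ) [Fact ℓ.Prime] (ζ : ℂ) (hζ : IsPrimitiveRoot ζ ℓ)

lemma psi_ne_zero : AddChar.zmodChar ℓ (hζ.pow_eq_one) ≠ 0 := by
  have hℓ1 : 1 < ℓ := (Fact.out : ℓ.Prime).one_lt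
  intro h
  have h1 : AddChar.zmodChar ℓ (hζ.pow_eq_one) (1 : ZMod ℓ) = 1 := by
    rw [h]; simp
  rw [AddChar.zmodChar_apply] at h1
  have hv : (1 : ZMod ℓ).val = 1 := ZMod.val_one ℓ
  rw [hv, pow_one] at h1
  exact hζ.ne_one hℓ1 h1

lemma sum_psi_shift (c : ZMod ℓ) (hc : c ≠ 0) :
    ∑ y : ZMod ℓ, AddChar.zmodChar ℓ (hζ.pow_eq_one) (c * y) = 0 := by
  set ψ := AddChar.zmodChar ℓ (hζ.pow_eq_one)
  have hbij : Function.Bijective (fun y : ZMod ℓ => c * y) :=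
    (Units.mk0 c hc).mulLeft_bijective
  have : ∑ y : ZMod ℓ, ψ (c * y) = ∑ y : ZMod ℓ, ψ y :=
    Fintype.sum_bijective _ hbij _ _ fun x => rfl
  rw [this]
  exact AddChar.sum_eq_zero_iff_ne_zero.mpr (psi_ne_zero ℓ ζ hζ)

noncomputable def chic : MulChar (ZMod ℓ) ℂ :=
  (quadraticChar (ZMod ℓ)).ringHomComp (Int.castRingHom ℂ)

lemma chic_apply (x : ZMod ℓ) : chic ℓ x = (quadraticChar (ZMod ℓ) x : ℂ) := rfl

lemma sum_chi_psi_shift (c : ZMod ℓ) (hc : c ≠ 0) :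
    ∑ y : ZMod ℓ, chic ℓ y * AddChar.zmodChar ℓ (hζ.pow_eq_one) (c * y)
      = chic ℓ c * gaussSum (chic ℓ) (AddChar.zmodChar ℓ (hζ.pow_eq_one)) := by
  set ψ := AddChar.zmodChar ℓ (hζ.pow_eq_one)
  have hms : ∑ y : ZMod ℓ, chic ℓ y * ψ (c * y) = gaussSum (chic ℓ) (ψ.mulShift c) := by
    simp [gaussSum, AddChar.mulShift_apply]
  have hsq : chic ℓ c * chic ℓ c = 1 := by
    rw [chic_apply, ← Int.cast_mul, ← pow_two, quadraticChar_sq_one hc]; norm_num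
  have := gaussSum_mulShift (chic ℓ) ψ (Units.mk0 c hc)
  rw [hms]
  calc gaussSum (chic ℓ) (ψ.mulShift c)
      = (chic ℓ c * chic ℓ c) * gaussSum (chic ℓ) (ψ.mulShift c) := by rw [hsq, one_mul]
    _ = chic ℓ c * (chic ℓ (Units.mk0 c hc) * gaussSum (chic ℓ) (ψ.mulShift ((Units.mk0 c hc : (ZMod ℓ)ˣ) : ZMod ℓ))) := by
        rw [mul_assoc]; rfl
    _ = chic ℓ c * gaussSum (chic ℓ) ψ := by rw [this]
end

section
variable (ℓ : ℕ) [Fact ℓ.Prime] (ζ : ℂ) (hζ : IsPrimitiveRoot ζ ℓ)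

lemma inner_sum_val (hℓ : Odd ℓ) (d : ZMod ℓ) (hd : d ≠ 0) :
    ∑ a ∈ Icc 1 ((ℓ - 1) / 2), AddChar.zmodChar ℓ (hζ.pow_eq_one) (-(a : ZMod ℓ) ^ 2 * d)
      = (chic ℓ (-d) * gaussSum (chic ℓ) (AddChar.zmodChar ℓ (hζ.pow_eq_one)) - 1) / 2 := by
  set ψ := AddChar.zmodChar ℓ (hζ.pow_eq_one) with hψ
  set g : ZMod ℓ → ℂ := fun y => ψ (-d * y) with hg
  have hterm : ∀ a : ℕ, ψ (-(a : ZMod ℓ) ^ 2 * d) = g ((a : ZMod ℓ) ^ 2) := by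
    intro a; rw [hg]; ring_nf
  have hnd : -d ≠ 0 := neg_ne_zero.mpr hd
  have h2 : (2 : ℂ) * ∑ a ∈ Icc 1 ((ℓ - 1) / 2), g ((a : ZMod ℓ) ^ 2)
      = chic ℓ (-d) * gaussSum (chic ℓ) ψ - 1 := by
    rw [← sum_sq_double ℓ hℓ g]
    rw [sum_Icc_eq_sum_zmod ℓ (fun x => g (x ^ 2))]
    have h0 : (0 : ZMod ℓ) ∈ (univ : Finset (ZMod ℓ)) := mem_univ 0
    have hsd : ∑ x ∈ univ \ {0}, g (x ^ 2) = (∑ x : ZMod ℓ, g (x ^ 2)) - g (0 ^ 2) := by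
      rw [eq_sub_iff_add_eq, Finset.sum_sdiff_eq_sub (by simp : {(0 : ZMod ℓ)} ⊆ univ)]
      simp
    rw [hsd, sum_sq_fiber ℓ hℓ g]
    have hzero : g (0 ^ 2) = 1 := by
      simp [hg]
    rw [hzero]
    have hsplit : ∑ y : ZMod ℓ, (1 + (quadraticChar (ZMod ℓ) y : ℂ)) * g y
        = (∑ y : ZMod ℓ, g y) + ∑ y : ZMod ℓ, chic ℓ y * g y := by
      rw [← Finset.sum_add_distrib]
      refine Finset.sum_congr rfl fun y _ => ?_
      rw [chic_apply]; ring
    rw [hsplit]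
    have e1 : ∑ y : ZMod ℓ, g y = 0 := sum_psi_shift ℓ ζ hζ (-d) hnd
    have e2 : ∑ y : ZMod ℓ, chic ℓ y * g y = chic ℓ (-d) * gaussSum (chic ℓ) ψ :=
      sum_chi_psi_shift ℓ ζ hζ (-d) hnd
    rw [e1, e2]; ring
  rw [Finset.sum_congr rfl fun a _ => hterm a]
  rw [eq_div_iff (two_ne_zero (α := ℂ))]
  linear_combination h2

end

section
variable (ℓ : ℕ) [Fact ℓ.Prime] (ζ : ℂ) (hζ : IsPrimitiveRoot ζ ℓ)

lemma chic_full_sum (hℓ : Odd ℓ) : ∑ d ∈ Icc 1 (ℓ - 1), chic ℓ (d : ZMod ℓ) = 0 := by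
  have hchar : ringChar (ZMod ℓ) ≠ 2 := by
    rw [ZMod.ringChar_zmod_n]; obtain ⟨t, ht⟩ := hℓ; omega
  rw [sum_Icc_eq_sum_zmod ℓ (fun x => chic ℓ x)]
  have h1 : ∑ x ∈ (univ : Finset (ZMod ℓ)) \ {0}, chic ℓ x
      = (∑ x : ZMod ℓ, chic ℓ x) - chic ℓ 0 := by
    rw [eq_sub_iff_add_eq, Finset.sum_sdiff_eq_sub (by simp : {(0 : ZMod ℓ)} ⊆ univ)]
    simp
  rw [h1]
  have h2 : ∑ x : ZMod ℓ, chic ℓ x = 0 := by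
    have := quadraticChar_sum_zero hchar
    calc ∑ x : ZMod ℓ, chic ℓ x = ((∑ x : ZMod ℓ, quadraticChar (ZMod ℓ) x : ℤ) : ℂ) := by
          push_cast [chic_apply]; rfl
      _ = 0 := by rw [this]; norm_num
  have h3 : chic ℓ (0 : ZMod ℓ) = 0 := by
    rw [chic_apply]; simp
  rw [h2, h3, sub_zero]

lemma chic_reflect (M : ℕ) (hM : M ≤ ℓ - 1) (hℓ : Odd ℓ) :
    ∑ d ∈ Icc 1 (ℓ - 1 - M), chic ℓ (-(d : ZMod ℓ))
      = - ∑ d ∈ Icc 1 M, chic ℓ (d : ZMod ℓ) := by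
  have hℓ1 : 1 < ℓ := (Fact.out : ℓ.Prime).one_lt
  set K := ℓ - 1 - M with hK
  have hsplit : Icc 1 (ℓ - 1) = Icc 1 K ∪ Icc (K + 1) (ℓ - 1) := by
    ext x; simp only [mem_Icc, mem_union]; omega
  have hdisj : Disjoint (Icc 1 K) (Icc (K + 1) (ℓ - 1)) := by
    rw [Finset.disjoint_left]; intro x hx hx'
    simp only [mem_Icc] at hx hx'; omega
  have hre : ∑ d ∈ Icc (K + 1) (ℓ - 1), chic ℓ (d : ZMod ℓ)
      = ∑ e ∈ Icc 1 M, chic ℓ (-(e : ZMod ℓ)) := by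
    refine Finset.sum_nbij' (fun d => ℓ - d) (fun e => ℓ - e) ?_ ?_ ?_ ?_ ?_
    · intro a ha; simp only [mem_Icc] at *; omega
    · intro a ha; simp only [mem_Icc] at *; omega
    · intro a ha; simp only [mem_Icc] at ha; show ℓ - (ℓ - a) = a; omega
    · intro a ha; simp only [mem_Icc] at ha; show ℓ - (ℓ - a) = a; omega
    · intro d hd
      simp only [mem_Icc] at hd
      have h1 : d ≤ ℓ := by omega
      have : ((ℓ - d : ℕ) : ZMod ℓ) = -(d : ZMod ℓ) := by
        push_cast [Nat.cast_sub h1]; simp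
      rw [this, neg_neg]
  have hfull := chic_full_sum ℓ hℓ
  rw [hsplit, Finset.sum_union hdisj, hre] at hfull
  -- hfull : ∑_{Icc 1 K} chic d + ∑_{Icc 1 M} chic (-e) = 0
  have hneg : ∀ x : ZMod ℓ, chic ℓ (-x) = chic ℓ (-1) * chic ℓ x := by
    intro x; rw [← map_mul]; ring_nf
  have hu : chic ℓ (-1 : ZMod ℓ) * chic ℓ (-1 : ZMod ℓ) = 1 := by
    rw [chic_apply, ← Int.cast_mul, ← pow_two,
      quadraticChar_sq_one (neg_ne_zero.mpr one_ne_zero)]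
    norm_num
  have hL : ∑ d ∈ Icc 1 K, chic ℓ (-(d : ZMod ℓ))
      = chic ℓ (-1) * ∑ d ∈ Icc 1 K, chic ℓ (d : ZMod ℓ) := by
    rw [mul_sum]; exact Finset.sum_congr rfl fun d _ => hneg _
  have hR : ∑ d ∈ Icc 1 M, chic ℓ (-(d : ZMod ℓ))
      = chic ℓ (-1) * ∑ d ∈ Icc 1 M, chic ℓ (d : ZMod ℓ) := by
    rw [mul_sum]; exact Finset.sum_congr rfl fun d _ => hneg _
  rw [hR] at hfull
  rw [hL]
  have := hfull
  -- ∑_K chic d = - chic(-1) * ∑_M chic d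
  have hKval : ∑ d ∈ Icc 1 K, chic ℓ (d : ZMod ℓ)
      = - (chic ℓ (-1) * ∑ d ∈ Icc 1 M, chic ℓ (d : ZMod ℓ)) := by
    linear_combination hfull
  rw [hKval]
  rw [mul_neg, ← mul_assoc, hu, one_mul]
end



/-- The character-sum identity behind Equation (6.10) (eq:ValueModular_r0) of
the paper: for an odd prime `ℓ`, a primitive `ℓ`-th root of unity `ζ ∈ ℂ`, the
quadratic Gauss sum `G = ∑_{a=1}^{ℓ-1} (a/ℓ) ζ^a`, and `M ≤ ℓ - 1`,
`∑_{a=1}^{(ℓ-1)/2} ∑_{d=1}^{ℓ-1-M} ζ^{-a²d}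
  = -(ℓ-1)/2 + (M - (∑_{d=1}^{M} (d/ℓ))·G)/2`. -/
theorem gauss_sum_double_sum
    (ℓ : ℕ) [Fact ℓ.Prime] (hℓ : Odd ℓ)
    (ζ : ℂ) (hζ : IsPrimitiveRoot ζ ℓ)
    (G : ℂ) (hG : G = ∑ a ∈ Finset.Icc 1 (ℓ - 1), (legendreSym ℓ a : ℂ) * ζ ^ a)
    (M : ℕ) (hM : M ≤ ℓ - 1) :
    ∑ a ∈ Finset.Icc 1 ((ℓ - 1) / 2), ∑ d ∈ Finset.Icc 1 (ℓ - 1 - M),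
        ζ ^ (-((a : ℤ) ^ 2 * (d : ℤ))) =
      -(((ℓ : ℂ) - 1) / 2) +
        ((M : ℂ) - (∑ d ∈ Finset.Icc 1 M, (legendreSym ℓ d : ℂ)) * G) / 2 := by
  have hℓ1 : 1 < ℓ := (Fact.out : ℓ.Prime).one_lt
  set ψ := AddChar.zmodChar ℓ (hζ.pow_eq_one) with hψ
  set Gg := gaussSum (chic ℓ) ψ with hGg
  -- legendre symbol in terms of chic
  have hleg : ∀ a : ℕ, (legendreSym ℓ (a : ℤ) : ℂ) = chic ℓ (a : ZMod ℓ) := by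
    intro a
    rw [legendreSym, chic_apply]
    norm_cast
  -- G = gaussSum
  have hGeq : G = Gg := by
    rw [hG]
    have hterm : ∀ a : ℕ, (legendreSym ℓ (a : ℤ) : ℂ) * ζ ^ a
        = chic ℓ (a : ZMod ℓ) * ψ (a : ZMod ℓ) := by
      intro a
      rw [hleg a]
      congr 1
      rw [← zpow_natCast, zpow_eq_char ℓ ζ hζ (a : ℤ)]
      norm_cast
    rw [Finset.sum_congr rfl fun a _ => hterm a,
      sum_Icc_eq_sum_zmod ℓ (fun x => chic ℓ x * ψ x)]
    have h1 : ∑ x ∈ (univ : Finset (ZMod ℓ)) \ {0}, chic ℓ x * ψ x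
        = (∑ x : ZMod ℓ, chic ℓ x * ψ x) - chic ℓ 0 * ψ 0 := by
      rw [eq_sub_iff_add_eq, Finset.sum_sdiff_eq_sub (by simp : {(0 : ZMod ℓ)} ⊆ univ)]
      simp
    rw [h1]
    have h3 : chic ℓ (0 : ZMod ℓ) = 0 := by rw [chic_apply]; simp
    rw [h3, zero_mul, sub_zero]
    rfl
  -- rewrite the double sum terms
  have hterm2 : ∀ a d : ℕ, ζ ^ (-((a : ℤ) ^ 2 * (d : ℤ)))
      = ψ (-(a : ZMod ℓ) ^ 2 * (d : ZMod ℓ)) := by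
    intro a d
    rw [zpow_eq_char ℓ ζ hζ]
    congr 1
    push_cast
    ring
  calc ∑ a ∈ Finset.Icc 1 ((ℓ - 1) / 2), ∑ d ∈ Finset.Icc 1 (ℓ - 1 - M),
        ζ ^ (-((a : ℤ) ^ 2 * (d : ℤ)))
      = ∑ d ∈ Finset.Icc 1 (ℓ - 1 - M), ∑ a ∈ Finset.Icc 1 ((ℓ - 1) / 2),
          ψ (-(a : ZMod ℓ) ^ 2 * (d : ZMod ℓ)) := by
        rw [Finset.sum_comm]
        exact Finset.sum_congr rfl fun d _ => Finset.sum_congr rfl fun a _ => hterm2 a d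
    _ = ∑ d ∈ Finset.Icc 1 (ℓ - 1 - M), (chic ℓ (-(d : ZMod ℓ)) * Gg - 1) / 2 := by
        refine Finset.sum_congr rfl fun d hd => ?_
        simp only [mem_Icc] at hd
        have hdne : (d : ZMod ℓ) ≠ 0 := by
          rw [Ne, ZMod.natCast_eq_zero_iff]
          intro hdvd
          have := Nat.eq_zero_of_dvd_of_lt hdvd (by omega)
          omega
        exact inner_sum_val ℓ ζ hζ hℓ (d : ZMod ℓ) hdne
    _ = ((∑ d ∈ Finset.Icc 1 (ℓ - 1 - M), chic ℓ (-(d : ZMod ℓ))) * Gg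
          - (ℓ - 1 - M : ℕ)) / 2 := by
        rw [← Finset.sum_div]
        congr 1
        rw [Finset.sum_sub_distrib, Finset.sum_mul, Finset.sum_const,
          Nat.card_Icc, nsmul_eq_mul, mul_one]
        norm_num
    _ = ((-(∑ d ∈ Finset.Icc 1 M, chic ℓ (d : ZMod ℓ))) * Gg - (ℓ - 1 - M : ℕ)) / 2 := by
        rw [chic_reflect ℓ M hM hℓ]
    _ = -(((ℓ : ℂ) - 1) / 2) +
        ((M : ℂ) - (∑ d ∈ Finset.Icc 1 M, (legendreSym ℓ d : ℂ)) * G) / 2 := by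
        have hS : ∑ d ∈ Finset.Icc 1 M, (legendreSym ℓ (d : ℤ) : ℂ)
            = ∑ d ∈ Finset.Icc 1 M, chic ℓ (d : ZMod ℓ) :=
          Finset.sum_congr rfl fun d _ => hleg d
        have hK : ((ℓ - 1 - M : ℕ) : ℂ) = (ℓ : ℂ) - 1 - M := by
          push_cast [Nat.cast_sub hM, Nat.cast_sub (by omega : 1 ≤ ℓ)]
          ring
        rw [hS, hGeq, hK]
        ring
end

section
/- Let ℓ be an odd prime, let ζ ∈ ℂ be a primitive ℓ-th root of unity, and let G := ∑_{a=1}^{ℓ−1} (legendreSym ℓ a)·ζ^a be the quadratic Gauss sum. Then ∑_{d=1}^{ℓ−1} (d/ℓ)·∑_{a=1}^{(ℓ−1)/2} ζ^{a²·d} = −(ℓ−1)/4 + (G/(2ℓ))·∑_{d=1}^{ℓ−1} d·(legendreSym ℓ d), where d/ℓ denotes the rational number d/ℓ viewed in ℂ. -/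
open Finset

private lemma aux_pow_mod {ℓ : ℕ} {ζ : ℂ} (hζ : IsPrimitiveRoot ζ ℓ) (m : ℕ) :
    ζ ^ m = ζ ^ (m % ℓ) := by
  conv_lhs => rw [← Nat.div_add_mod m ℓ]
  rw [pow_add, pow_mul, hζ.pow_eq_one, one_pow, one_mul]

private lemma aux_transfer (ℓ : ℕ) [NeZero ℓ] (g : ZMod ℓ → ℂ) :
    ∑ x : ZMod ℓ, g x = ∑ k ∈ range ℓ, g (k : ZMod ℓ) := by
  refine Finset.sum_nbij' (fun x => x.val) (fun k => (k : ZMod ℓ)) ?_ ?_ ?_ ?_ ?_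
  · intro a _; exact Finset.mem_range.mpr (ZMod.val_lt a)
  · intro b _; exact Finset.mem_univ _
  · intro a _; exact ZMod.natCast_rightInverse a
  · intro b hb; exact ZMod.val_cast_of_lt (Finset.mem_range.mp hb)
  · intro a _
    rw [(ZMod.natCast_rightInverse a : ((a.val : ℕ) : ZMod ℓ) = a)]

/-- The character-sum identity behind Equation (6.11) (eq:ValueModular_r1) of
the paper: for an odd prime `ℓ`, a primitive `ℓ`-th root of unity `ζ ∈ ℂ` and
the quadratic Gauss sum `G = ∑_{a=1}^{ℓ-1} (a/ℓ) ζ^a`,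
`∑_{d=1}^{ℓ-1} (d/ℓ)·∑_{a=1}^{(ℓ-1)/2} ζ^{a²d}
  = -(ℓ-1)/4 + (G/(2ℓ))·∑_{d=1}^{ℓ-1} d·(d/ℓ)` (here the first `d/ℓ` is the
rational number `d/ℓ` and the weights `(d/ℓ)` in the last sum are Legendre
symbols). -/
theorem gauss_sum_weighted_sum
    (ℓ : ℕ) [Fact ℓ.Prime] (hℓ : Odd ℓ)
    (ζ : ℂ) (hζ : IsPrimitiveRoot ζ ℓ)
    (G : ℂ) (hG : G = ∑ a ∈ Finset.Icc 1 (ℓ - 1), (legendreSym ℓ a : ℂ) * ζ ^ a) :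
    ∑ d ∈ Finset.Icc 1 (ℓ - 1), ((d : ℂ) / (ℓ : ℂ)) *
        ∑ a ∈ Finset.Icc 1 ((ℓ - 1) / 2), ζ ^ (a ^ 2 * d) =
      -(((ℓ : ℂ) - 1) / 4) +
        (G / (2 * (ℓ : ℂ))) *
          ∑ d ∈ Finset.Icc 1 (ℓ - 1), (d : ℂ) * (legendreSym ℓ d : ℂ) := by
  have hp : ℓ.Prime := Fact.out
  haveI : NeZero ℓ := ⟨hp.ne_zero⟩
  obtain ⟨m, hm⟩ := hℓ
  have h3 : 3 ≤ ℓ := by have := hp.two_le; omega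
  have hl1 : 1 < ℓ := by omega
  have hF2 : ringChar (ZMod ℓ) ≠ 2 := by
    rw [ZMod.ringChar_zmod_n]; omega
  have hℓ0 : (ℓ : ℂ) ≠ 0 := by exact_mod_cast hp.ne_zero
  set q : ZMod ℓ → ℤ := fun x => quadraticChar (ZMod ℓ) x with hq
  set Gz : ℂ := ∑ x : ZMod ℓ, (q x : ℂ) * ζ ^ x.val with hGz
  have hins : Finset.range ℓ = insert 0 (Finset.Icc 1 (ℓ - 1)) := by
    ext a; simp only [Finset.mem_range, Finset.mem_insert, Finset.mem_Icc]; omega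
  have h0notin : (0 : ℕ) ∉ Finset.Icc 1 (ℓ - 1) := by simp
  have hleg : ∀ k : ℕ, ((legendreSym ℓ (k : ℤ)) : ℂ) = ((q ((k : ℕ) : ZMod ℓ)) : ℂ) := by
    intro k
    have h : legendreSym ℓ (k : ℤ) = q ((k : ℕ) : ZMod ℓ) := by
      show quadraticChar (ZMod ℓ) (((k : ℤ) : ZMod ℓ)) = quadraticChar (ZMod ℓ) ((k : ZMod ℓ))
      norm_cast
    rw [h]
  -- `Gz = G`
  have hGzG : Gz = G := by
    rw [hGz, aux_transfer ℓ, hins, Finset.sum_insert h0notin, hG]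
    have h0 : (q ((0 : ℕ) : ZMod ℓ) : ℂ) * ζ ^ ((0 : ℕ) : ZMod ℓ).val = 0 := by
      simp [hq]
    rw [h0, zero_add]
    refine Finset.sum_congr rfl fun k hk => ?_
    obtain ⟨hk1, hk2⟩ := Finset.mem_Icc.mp hk
    have hklt : k < ℓ := by omega
    rw [ZMod.val_cast_of_lt hklt, hleg k]
  -- the geometric sum
  have hgeom : ∑ x : ZMod ℓ, ζ ^ x.val = 0 := by
    rw [aux_transfer ℓ]
    rw [show ∑ k ∈ range ℓ, ζ ^ ((k : ZMod ℓ)).val = ∑ k ∈ range ℓ, ζ ^ k from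
      Finset.sum_congr rfl fun k hk => by
        rw [ZMod.val_cast_of_lt (Finset.mem_range.mp hk)]]
    exact hζ.geom_sum_eq_zero hl1
  -- shifted geometric sum
  have hshift : ∀ δ : ZMod ℓ, δ ≠ 0 → ∑ x : ZMod ℓ, ζ ^ (x * δ).val = 0 := by
    intro δ hδ
    have hb : Function.Bijective (fun x : ZMod ℓ => x * δ) := (Equiv.mulRight₀ δ hδ).bijective
    rw [Fintype.sum_bijective _ hb (fun x => ζ ^ (x * δ).val) (fun y => ζ ^ y.val)
      (fun x => rfl)]
    exact hgeom
  -- shifted character sum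
  have hchishift : ∀ δ : ZMod ℓ, δ ≠ 0 →
      ∑ x : ZMod ℓ, (q x : ℂ) * ζ ^ (x * δ).val = (q δ : ℂ) * Gz := by
    intro δ hδ
    have hb : Function.Bijective (fun x : ZMod ℓ => x * δ) := (Equiv.mulRight₀ δ hδ).bijective
    have hre : (∑ x : ZMod ℓ, (q x : ℂ) * ζ ^ x.val)
        = ∑ x : ZMod ℓ, (q (x * δ) : ℂ) * ζ ^ (x * δ).val :=
      (Fintype.sum_bijective _ hb (fun x => (q (x * δ) : ℂ) * ζ ^ (x * δ).val)
        (fun y => (q y : ℂ) * ζ ^ y.val) (fun x => rfl)).symm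
    rw [hGz, hre, Finset.mul_sum]
    refine (Finset.sum_congr rfl fun y _ => ?_)
    have hqq : (q δ : ℤ) * q (y * δ) = q y := by
      have : q (y * δ) = q y * q δ := map_mul (quadraticChar (ZMod ℓ)) y δ
      rw [this]
      have h1 : q δ * (q y * q δ) = q y * (q δ ^ 2) := by ring
      rw [h1, quadraticChar_sq_one hδ, mul_one]
    calc (q y : ℂ) * ζ ^ (y * δ).val
        = ((q δ * q (y * δ) : ℤ) : ℂ) * ζ ^ (y * δ).val := by rw [hqq]
      _ = (q δ : ℂ) * ((q (y * δ) : ℂ) * ζ ^ (y * δ).val) := by push_cast; ring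
  -- counting square roots
  have hsqcount : ∀ F : ZMod ℓ → ℂ,
      ∑ x : ZMod ℓ, F (x ^ 2) = ∑ y : ZMod ℓ, (1 + (q y : ℂ)) * F y := by
    intro F
    rw [← Finset.sum_fiberwise' Finset.univ (fun x : ZMod ℓ => x ^ 2) F]
    refine Finset.sum_congr rfl fun y _ => ?_
    rw [Finset.sum_const, nsmul_eq_mul]
    have h := quadraticChar_card_sqrts hF2 y
    rw [Set.toFinset_setOf] at h
    have hc : ((Finset.univ.filter (fun x : ZMod ℓ => x ^ 2 = y)).card : ℂ)
        = (q y : ℂ) + 1 := by exact_mod_cast h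
    rw [hc]; ring
  -- full sum over a of ζ^(a²d), for d not divisible by ℓ
  have hfull : ∀ d : ℕ, ¬ ℓ ∣ d →
      ∑ a ∈ Finset.range ℓ, ζ ^ (a ^ 2 * d) = ((legendreSym ℓ d : ℤ) : ℂ) * G := by
    intro d hd
    have hδ : ((d : ℕ) : ZMod ℓ) ≠ 0 := by
      rw [Ne, ZMod.natCast_eq_zero_iff]; exact hd
    have hterm : ∀ a : ℕ, ζ ^ (a ^ 2 * d)
        = ζ ^ (((a : ZMod ℓ) ^ 2 * (d : ZMod ℓ)).val) := by
      intro a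
      have : ((a : ZMod ℓ) ^ 2 * (d : ZMod ℓ)) = ((a ^ 2 * d : ℕ) : ZMod ℓ) := by push_cast; ring
      rw [this, ZMod.val_natCast, ← aux_pow_mod hζ]
    calc ∑ a ∈ Finset.range ℓ, ζ ^ (a ^ 2 * d)
        = ∑ a ∈ Finset.range ℓ, ζ ^ ((((a : ZMod ℓ)) ^ 2 * (d : ZMod ℓ)).val) :=
          Finset.sum_congr rfl fun a _ => hterm a
      _ = ∑ x : ZMod ℓ, ζ ^ ((x ^ 2 * (d : ZMod ℓ)).val) :=
          (aux_transfer ℓ (fun x => ζ ^ ((x ^ 2 * (d : ZMod ℓ)).val))).symm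
      _ = ∑ y : ZMod ℓ, (1 + (q y : ℂ)) * ζ ^ ((y * (d : ZMod ℓ)).val) :=
          hsqcount (fun y => ζ ^ ((y * (d : ZMod ℓ)).val))
      _ = ∑ y : ZMod ℓ, (ζ ^ ((y * (d : ZMod ℓ)).val)
            + (q y : ℂ) * ζ ^ ((y * (d : ZMod ℓ)).val)) :=
          Finset.sum_congr rfl fun y _ => by ring
      _ = ((legendreSym ℓ d : ℤ) : ℂ) * G := by
          rw [Finset.sum_add_distrib, hshift _ hδ, hchishift _ hδ, zero_add, hGzG,
            hleg d]
  -- the pairing a ↔ ℓ - a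
  have hsq : ∀ a b d : ℕ, b ≤ a → a + b = ℓ → ζ ^ (a ^ 2 * d) = ζ ^ (b ^ 2 * d) := by
    intro a b d hba hab
    obtain ⟨c, rfl⟩ : ∃ c, a = b + c := ⟨a - b, by omega⟩
    have he : (b + c) ^ 2 * d = b ^ 2 * d + ℓ * (c * d) := by
      rw [← hab]; ring
    have h1 : ζ ^ (ℓ * (c * d)) = 1 := by rw [pow_mul, hζ.pow_eq_one, one_pow]
    rw [he, pow_add, h1, mul_one]
  have hpair : ∀ d : ℕ, ∑ a ∈ Finset.Icc 1 (ℓ - 1), ζ ^ (a ^ 2 * d)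
      = 2 * ∑ a ∈ Finset.Icc 1 ((ℓ - 1) / 2), ζ ^ (a ^ 2 * d) := by
    intro d
    have hIcc : ∀ x : ℕ, Finset.Icc 1 x = Finset.Ioc 0 x := fun x => by
      rw [← Finset.Icc_add_one_left_eq_Ioc]; rfl
    have hhalf : (ℓ - 1) / 2 = m := by omega
    rw [hIcc, hIcc, hhalf,
      ← Finset.sum_Ioc_consecutive (fun a => ζ ^ (a ^ 2 * d))
        (Nat.zero_le m) (show m ≤ ℓ - 1 by omega)]
    have hsecond : ∑ a ∈ Finset.Ioc m (ℓ - 1), ζ ^ (a ^ 2 * d)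
        = ∑ a ∈ Finset.Ioc 0 m, ζ ^ (a ^ 2 * d) := by
      refine Finset.sum_nbij' (fun a => ℓ - a) (fun a => ℓ - a) ?_ ?_ ?_ ?_ ?_
      · intro a ha; simp only [Finset.mem_Ioc] at ha ⊢; omega
      · intro a ha; simp only [Finset.mem_Ioc] at ha ⊢; omega
      · intro a ha; simp only [Finset.mem_Ioc] at ha ⊢; omega
      · intro a ha; simp only [Finset.mem_Ioc] at ha ⊢; omega
      · intro a ha; simp only [Finset.mem_Ioc] at ha
        exact (hsq a (ℓ - a) d (by omega) (by omega))
    rw [hsecond]; ring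
  -- the key identity for the inner sum
  have key : ∀ d ∈ Finset.Icc 1 (ℓ - 1),
      ∑ a ∈ Finset.Icc 1 ((ℓ - 1) / 2), ζ ^ (a ^ 2 * d)
        = ((legendreSym ℓ d : ℂ) * G - 1) / 2 := by
    intro d hd
    obtain ⟨hd1, hd2⟩ := Finset.mem_Icc.mp hd
    have hdvd : ¬ ℓ ∣ d := by
      intro h; rcases h with ⟨k, rfl⟩
      rcases Nat.eq_zero_or_pos k with rfl | h
      · simp at hd1
      · have := Nat.le_mul_of_pos_right ℓ h; omega
    have h1 : ∑ a ∈ Finset.range ℓ, ζ ^ (a ^ 2 * d)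
        = 1 + ∑ a ∈ Finset.Icc 1 (ℓ - 1), ζ ^ (a ^ 2 * d) := by
      rw [hins, Finset.sum_insert h0notin]
      norm_num
    have h2 := hfull d hdvd
    rw [h1, hpair d] at h2
    linear_combination h2 / 2
  -- sum of d over Icc
  have hS0 : (∑ d ∈ Finset.Icc 1 (ℓ - 1), (d : ℂ)) = (ℓ : ℂ) * ((ℓ : ℂ) - 1) / 2 := by
    have hn : (∑ d ∈ Finset.range ℓ, d) * 2 = ℓ * (ℓ - 1) := Finset.sum_range_id_mul_two ℓ
    have h1 : ∑ d ∈ Finset.range ℓ, (d : ℂ) = ∑ d ∈ Finset.Icc 1 (ℓ - 1), (d : ℂ) := by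
      rw [hins, Finset.sum_insert h0notin, Nat.cast_zero, zero_add]
    have h2 : (∑ d ∈ Finset.range ℓ, (d : ℂ)) * 2 = (ℓ : ℂ) * ((ℓ : ℂ) - 1) := by
      have h := congrArg (fun n : ℕ => (n : ℂ)) hn
      push_cast [Nat.cast_sub hl1.le] at h
      exact h
    rw [← h1]
    linear_combination h2 / 2
  -- final assembly
  calc ∑ d ∈ Finset.Icc 1 (ℓ - 1), ((d : ℂ) / (ℓ : ℂ)) *
        ∑ a ∈ Finset.Icc 1 ((ℓ - 1) / 2), ζ ^ (a ^ 2 * d)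
      = ∑ d ∈ Finset.Icc 1 (ℓ - 1), ((d : ℂ) / (ℓ : ℂ)) *
          (((legendreSym ℓ d : ℂ) * G - 1) / 2) :=
        Finset.sum_congr rfl fun d hd => by rw [key d hd]
    _ = ∑ d ∈ Finset.Icc 1 (ℓ - 1), ((G / (2 * (ℓ : ℂ))) * ((d : ℂ) * (legendreSym ℓ d : ℂ))
          - (d : ℂ) / (2 * (ℓ : ℂ))) :=
        Finset.sum_congr rfl fun d _ => by field_simp
    _ = (G / (2 * (ℓ : ℂ))) * (∑ d ∈ Finset.Icc 1 (ℓ - 1), (d : ℂ) * (legendreSym ℓ d : ℂ))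
          - (∑ d ∈ Finset.Icc 1 (ℓ - 1), (d : ℂ)) / (2 * (ℓ : ℂ)) := by
        rw [Finset.sum_sub_distrib, ← Finset.mul_sum, ← Finset.sum_div]
    _ = -(((ℓ : ℂ) - 1) / 4) +
        (G / (2 * (ℓ : ℂ))) *
          ∑ d ∈ Finset.Icc 1 (ℓ - 1), (d : ℂ) * (legendreSym ℓ d : ℂ) := by
        rw [hS0]; field_simp; ring
end
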